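/- For d(y,z) ≤ √t one has the estimate d(y,z)/√t ≤ C·(d̃(y,z)/r)^{1/q}·(1 + d(x,y)/√t), where r = μ(B(x,√t)) and C depends only on the doubling constants. -/

import Mathlib

open MeasureTheory Metric

/-- If `d(y,z) ≤ √t` and `r = μ(B(x,√t))`, then
`d(y,z)/√t ≤ C (d̃(y,z)/r)^{1/q} (1 + d(x,y)/√t)`. -/
theorem dist_ratio_le_dtilde_ratio
    {X : Type*} [MetricSpace X] [MeasurableSpace X] [BorelSpace X]
    (μ : Measure X)
    (hvol : ∀ (x : X) (r : ℝ), 0 < r → 0 < (μ (closedBall x r)).toReal)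
    (Cd q : ℝ) (hCd : 0 < Cd) (hq : 0 < q)
    (hdouble : ∀ (x : X) (r s : ℝ), 0 < r → 1 ≤ s →
      (μ (closedBall x (s * r))).toReal ≤ Cd * s ^ q * (μ (closedBall x r)).toReal)
    (dt : X → X → ℝ)
    (Cb : ℝ) (hCb : 0 < Cb)
    (hdt : ∀ x y : X,
      Cb⁻¹ * (μ (closedBall x (dist x y))).toReal ≤ dt x y ∧
      dt x y ≤ (μ (closedBall x (dist x y))).toReal) :
    ∃ C > (0 : ℝ), ∀ (x y z : X) (t r : ℝ), 0 < t → dist y z ≤ Real.sqrt t →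
      r = (μ (closedBall x (Real.sqrt t))).toReal →
      dist y z / Real.sqrt t ≤
        C * (dt y z / r) ^ (1 / q) * (1 + dist x y / Real.sqrt t) := by
  refine ⟨(Cb * Cd) ^ (1 / q), Real.rpow_pos_of_pos (mul_pos hCb hCd) _, ?_⟩
  intro x y z t r ht hdz hr
  set s := Real.sqrt t with hs_def
  have hs : 0 < s := Real.sqrt_pos.2 ht
  have hrpos : 0 < r := hr ▸ hvol x s hs
  have hdtnn : 0 ≤ dt y z :=
    le_trans (by positivity) (hdt y z).1
  rcases eq_or_lt_of_le (dist_nonneg (x := y) (y := z)) with h0 | hd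
  · rw [← h0, zero_div]
    have h1 : (0:ℝ) ≤ (dt y z / r) ^ (1 / q) :=
      Real.rpow_nonneg (div_nonneg hdtnn hrpos.le) _
    have h2 : (0:ℝ) ≤ 1 + dist x y / s := by positivity
    have h3 : (0:ℝ) ≤ (Cb * Cd) ^ (1 / q) :=
      (Real.rpow_pos_of_pos (mul_pos hCb hCd) _).le
    exact mul_nonneg (mul_nonneg h3 h1) h2
  · set d := dist y z with hd_def
    have hR : 0 < dist x y + s := by positivity
    have hsub : closedBall x s ⊆ closedBall y (dist x y + s) := by
      intro w hw
      simp only [mem_closedBall] at *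
      calc dist w y ≤ dist w x + dist x y := dist_triangle _ _ _
        _ ≤ s + dist x y := by linarith
        _ = dist x y + s := by ring
    have hfin : μ (closedBall y (dist x y + s)) ≠ ⊤ := by
      intro h
      have := hvol y (dist x y + s) hR
      rw [h] at this; simp at this
    have hmono : r ≤ (μ (closedBall y (dist x y + s))).toReal := by
      rw [hr]
      exact ENNReal.toReal_mono hfin (measure_mono hsub)
    have hscale : (1:ℝ) ≤ (dist x y + s) / d := by
      rw [le_div_iff₀ hd]
      have := dist_nonneg (x := x) (y := y)
      linarith
    have hdouble' := hdouble y d ((dist x y + s) / d) hd hscale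
    rw [div_mul_cancel₀ _ (ne_of_gt hd)] at hdouble'
    have hball : (μ (closedBall y d)).toReal ≤ Cb * dt y z := by
      have h1 := (hdt y z).1
      calc (μ (closedBall y d)).toReal
          = Cb * (Cb⁻¹ * (μ (closedBall y (dist y z))).toReal) := by
            rw [← hd_def]; field_simp
        _ ≤ Cb * dt y z := mul_le_mul_of_nonneg_left h1 hCb.le
    have key : r ≤ Cd * ((dist x y + s) / d) ^ q * (Cb * dt y z) := by
      calc r ≤ (μ (closedBall y (dist x y + s))).toReal := hmono
        _ ≤ Cd * ((dist x y + s) / d) ^ q * (μ (closedBall y d)).toReal := hdouble'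
        _ ≤ Cd * ((dist x y + s) / d) ^ q * (Cb * dt y z) := by
            apply mul_le_mul_of_nonneg_left hball
            have : (0:ℝ) < ((dist x y + s) / d) ^ q :=
              Real.rpow_pos_of_pos (by positivity) q
            positivity
    have hdq : (0:ℝ) < d ^ q := Real.rpow_pos_of_pos hd q
    have hRq : (0:ℝ) < (dist x y + s) ^ q := Real.rpow_pos_of_pos hR q
    have hdivq : ((dist x y + s) / d) ^ q = (dist x y + s) ^ q / d ^ q :=
      Real.div_rpow hR.le hd.le q
    have key2 : r * d ^ q ≤ Cb * Cd * dt y z * (dist x y + s) ^ q := by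
      have h2 := mul_le_mul_of_nonneg_right key hdq.le
      rw [hdivq] at h2
      calc r * d ^ q ≤ Cd * ((dist x y + s) ^ q / d ^ q) * (Cb * dt y z) * d ^ q := h2
        _ = Cb * Cd * dt y z * (dist x y + s) ^ q := by field_simp
    have C1 : (d / (dist x y + s)) ^ q ≤ Cb * Cd * (dt y z / r) := by
      have heq : Cb * Cd * (dt y z / r) = (Cb * Cd * dt y z) / r := by ring
      rw [Real.div_rpow hd.le hR.le, heq, div_le_div_iff₀ hRq hrpos]
      calc d ^ q * r = r * d ^ q := by ring
        _ ≤ Cb * Cd * dt y z * (dist x y + s) ^ q := key2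
    have B : d / (dist x y + s) ≤ (Cb * Cd) ^ (1 / q) * (dt y z / r) ^ (1 / q) := by
      have h3 := Real.rpow_le_rpow (by positivity) C1 (by positivity : (0:ℝ) ≤ 1 / q)
      have hu : ((d / (dist x y + s)) ^ q) ^ (1 / q) = d / (dist x y + s) := by
        rw [← Real.rpow_mul (by positivity), mul_one_div, div_self hq.ne', Real.rpow_one]
      have hm : (Cb * Cd * (dt y z / r)) ^ (1 / q)
          = (Cb * Cd) ^ (1 / q) * (dt y z / r) ^ (1 / q) :=
        Real.mul_rpow (by positivity) (div_nonneg hdtnn hrpos.le)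
      rw [hu, hm] at h3
      exact h3
    have hfrac : d / s = (d / (dist x y + s)) * (1 + dist x y / s) := by
      field_simp
      ring
    rw [hfrac]
    exact mul_le_mul_of_nonneg_right B (by positivity)
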